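/- Let k be a field, m > 1 an integer, g ∈ k[Z,T], and B = k[X,Y,Z,T]/(X^m Y − g). Let f be a prime element of k[Z,T] such that g ∉ f·k[Z,T]. Then D = B/fB is an integral domain. -/

import Mathlib

open Polynomial

/-- A `k`-algebra homomorphism `φ : A → A[U]` is an *exponential map* if evaluating `U` at `0`
gives the identity and `φ_V φ_U = φ_{V+U}` (comultiplicativity). -/
def IsExponentialMap {k A : Type*} [CommSemiring k] [CommSemiring A] [Algebra k A]
    (φ : A →ₐ[k] A[X]) : Prop :=
  (∀ a : A, (φ a).eval 0 = a) ∧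
  (∀ a : A, (φ a).map (φ : A →+* A[X]) =
      (φ a).eval₂ ((C : A[X] →+* A[X][X]).comp (C : A →+* A[X])) (C X + X))

/-- The ring of invariants `A^φ = {a ∈ A | φ(a) = a}` of a `k`-algebra map `φ : A → A[U]`,
as a subalgebra of `A`. -/
def expInv {k A : Type*} [CommSemiring k] [CommSemiring A] [Algebra k A]
    (φ : A →ₐ[k] A[X]) : Subalgebra k A where
  carrier := {a | φ a = C a}
  mul_mem' := fun {a b} ha hb => by
    simp only [Set.mem_setOf_eq] at *
    rw [map_mul, ha, hb, ← C_mul]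
  add_mem' := fun {a b} ha hb => by
    simp only [Set.mem_setOf_eq] at *
    rw [map_add, ha, hb, ← C_add]
  algebraMap_mem' := fun r => by
    simp only [Set.mem_setOf_eq, AlgHom.commutes, Polynomial.algebraMap_apply]

/-- An exponential map is non-trivial if its ring of invariants is a proper subring. -/
def IsNontrivialExpMap {k A : Type*} [CommSemiring k] [CommSemiring A] [Algebra k A]
    (φ : A →ₐ[k] A[X]) : Prop :=
  IsExponentialMap φ ∧ expInv φ ≠ ⊤

/-- The Derksen invariant: the `k`-subalgebra of `A` generated by the invariants of all
non-trivial exponential maps on `A`. -/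
def DerksenInvariant (k A : Type*) [CommSemiring k] [CommSemiring A] [Algebra k A] :
    Subalgebra k A :=
  Algebra.adjoin k {a : A | ∃ φ : A →ₐ[k] A[X], IsNontrivialExpMap φ ∧ a ∈ expInv φ}

/-- The transcendence degree of a commutative `k`-algebra `A`: the supremum of the
cardinalities of algebraically independent subsets of `A`. -/
noncomputable def trdeg (k A : Type*) [CommRing k] [CommRing A] [Algebra k A] : Cardinal :=
  ⨆ s : {s : Set A // AlgebraicIndependent k ((↑) : s → A)}, Cardinal.mk s.1

namespace FiberRingAux

open MvPolynomial

namespace FiberAux2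

open MvPolynomial

variable {k : Type} [Field k]

def jm : Fin 2 → Fin 4 := fun i => ⟨(i : ℕ) + 2, by omega⟩


lemma jm_injective : Function.Injective (jm : Fin 2 -> Fin 4) := by
  intro a b hab
  have h : (a : Nat) + 2 = (b : Nat) + 2 := congrArg Fin.val hab
  exact Fin.ext (by omega)

lemma prime_rename_of_injective {k : Type} [Field k] {σ τ : Type} {j : σ → τ}
    (hj : Function.Injective j)
    {p : MvPolynomial σ k} (hp : Prime p) : Prime (rename j p) := by
  have h1 : Prime (rename (Equiv.ofInjective j hj) p) :=
    (MulEquiv.prime_iff (renameEquiv k (Equiv.ofInjective j hj)).toMulEquiv).2 hp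
  have h2 : rename j p =
      rename ((↑) : Set.range j → τ) (rename (Equiv.ofInjective j hj) p) := by
    rw [rename_rename]
    rfl
  rw [h2]
  exact (prime_rename_iff (Set.range j)).2 h1

/-- The quotient ring `k[Z,T]/(f)`. -/
abbrev Qf (f : MvPolynomial (Fin 2) k) : Type := MvPolynomial (Fin 2) k ⧸ Ideal.span {f}

/-- Localization of `(k[Z,T]/(f))[X]` away from `X`. -/
abbrev Ff (f : MvPolynomial (Fin 2) k) : Type :=
  Localization.Away (Polynomial.X : Polynomial (Qf f))

/-- The natural map `k[Z,T] → Ff f`. -/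
noncomputable def emb (f : MvPolynomial (Fin 2) k) : MvPolynomial (Fin 2) k →+* Ff f :=
  (@algebraMap (Polynomial (Qf f)) (Ff f) Polynomial.commSemiring _ _).comp
    ((Polynomial.C : Qf f →+* Polynomial (Qf f)).comp (Ideal.Quotient.mk _))

noncomputable def xx (f : MvPolynomial (Fin 2) k) : Ff f :=
  @algebraMap (Polynomial (Qf f)) (Ff f) Polynomial.commSemiring _ _ Polynomial.X

noncomputable def vv (m : ℕ) (g f : MvPolynomial (Fin 2) k) : Fin 4 → Ff f := fun i =>
  if i = 0 then xx f
  else if i = 1 then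
    IsLocalization.mk' (Ff f) (Polynomial.C (Ideal.Quotient.mk (Ideal.span {f}) g))
      (⟨Polynomial.X ^ m, m, rfl⟩ : Submonoid.powers (Polynomial.X : Polynomial (Qf f)))
  else if i = 2 then emb f (X 0) else emb f (X 1)

/-- The evaluation `k[X,Y,Z,T] → Ff f` sending `X ↦ X`, `Y ↦ g/Xᵐ`, `Z ↦ Z`, `T ↦ T`. -/
noncomputable def chi (m : ℕ) (g f : MvPolynomial (Fin 2) k) :
    MvPolynomial (Fin 4) k →+* Ff f :=
  eval₂Hom ((emb f).comp (C : k →+* MvPolynomial (Fin 2) k)) (vv m g f)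

/-- The map `k[Z,T][U] → k[X,Y,Z,T]` sending coefficients via `rename jm` and `U ↦ X`. -/
noncomputable def EE : Polynomial (MvPolynomial (Fin 2) k) →+* MvPolynomial (Fin 4) k :=
  Polynomial.eval₂RingHom (rename jm).toRingHom (X 0)

noncomputable def ev0 : MvPolynomial (Fin 4) k →+* MvPolynomial (Fin 4) k :=
  eval₂Hom C (fun i => if i = 0 then 0 else X i)

noncomputable def ev1 : MvPolynomial (Fin 4) k →+* MvPolynomial (Fin 4) k :=
  eval₂Hom C (fun i => if i = 0 then 1 else X i)

noncomputable def rr : MvPolynomial (Fin 4) k →+* MvPolynomial (Fin 2) k :=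
  eval₂Hom C (fun i => if i = 2 then X 0 else if i = 3 then X 1 else 0)

lemma ev0_rename (q : MvPolynomial (Fin 2) k) :
    ev0 (rename jm q) = rename jm q := by
  have : (ev0 : MvPolynomial (Fin 4) k →+* _).comp (rename jm).toRingHom
      = (rename jm).toRingHom := by
    apply MvPolynomial.ringHom_ext <;> intro i <;>
      simp [ev0, jm]
  exact DFunLike.congr_fun this q

lemma ev1_rename (q : MvPolynomial (Fin 2) k) :
    ev1 (rename jm q) = rename jm q := by
  have : (ev1 : MvPolynomial (Fin 4) k →+* _).comp (rename jm).toRingHom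
      = (rename jm).toRingHom := by
    apply MvPolynomial.ringHom_ext <;> intro i <;>
      simp [ev1, jm, Fin.ext_iff, -Fin.val_eq_zero_iff]
  exact DFunLike.congr_fun this q

lemma rr_rename (q : MvPolynomial (Fin 2) k) :
    rr (rename jm q) = q := by
  have : (rr : MvPolynomial (Fin 4) k →+* _).comp (rename jm).toRingHom
      = RingHom.id _ := by
    apply MvPolynomial.ringHom_ext
    · intro a; simp [rr]
    · intro i; fin_cases i <;> simp [rr, jm]
  exact DFunLike.congr_fun this q

lemma chi_rename (m : ℕ) (g f : MvPolynomial (Fin 2) k) (q : MvPolynomial (Fin 2) k) :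
    chi m g f (rename jm q) = emb f q := by
  have : (chi m g f).comp (rename jm).toRingHom = emb f := by
    apply MvPolynomial.ringHom_ext
    · intro a
      simp [chi, emb]
    · intro i
      fin_cases i <;> simp [chi, vv, jm]
  exact DFunLike.congr_fun this q

lemma chi_EE (m : ℕ) (g f : MvPolynomial (Fin 2) k) (r : Polynomial (MvPolynomial (Fin 2) k)) :
    chi m g f (EE r)
      = @algebraMap (Polynomial (Qf f)) (Ff f) Polynomial.commSemiring _ _
          (r.map (Ideal.Quotient.mk (Ideal.span {f}))) := by
  have : (chi m g f).comp EE
      = (@algebraMap (Polynomial (Qf f)) (Ff f) Polynomial.commSemiring _ _).comp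
          (Polynomial.mapRingHom (Ideal.Quotient.mk (Ideal.span {f}))) := by
    apply Polynomial.ringHom_ext
    · intro a
      simp [EE, chi_rename, emb]
    · simp [EE, chi, vv, xx]
  exact DFunLike.congr_fun this r


set_option synthInstance.maxHeartbeats 1000000
set_option maxHeartbeats 1600000

theorem span_pair_prime {k : Type} [Field k] (m : ℕ) (hm : 1 < m)
    (g f : MvPolynomial (Fin 2) k) (hf : Prime f) (hfg : ¬ f ∣ g) :
    (Ideal.span {(X 0 : MvPolynomial (Fin 4) k) ^ m * X 1 - rename jm g,
      rename jm f}).IsPrime := by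
  set h₀ := (X 0 : MvPolynomial (Fin 4) k) ^ m * X 1 - rename jm g with hh₀
  set J := Ideal.span {h₀, rename jm f} with hJ
  haveI hsp : (Ideal.span {f}).IsPrime := (Ideal.span_singleton_prime hf.ne_zero).mpr hf
  haveI : IsDomain (Qf f) := Ideal.Quotient.isDomain _
  have hM : (Submonoid.powers (Polynomial.X : Polynomial (Qf f))) ≤
      nonZeroDivisors (Polynomial (Qf f)) :=
    powers_le_nonZeroDivisors_of_noZeroDivisors (Polynomial.X_ne_zero (R := Qf f))
  haveI hFdom : IsDomain (Ff f) :=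
    IsLocalization.isDomain_of_le_nonZeroDivisors (R := Polynomial (Qf f)) (Ff f) hM
  have halg_inj : Function.Injective (algebraMap (Polynomial (Qf f)) (Ff f)) :=
    IsLocalization.injective _ hM
  -- χ kills the generators
  have hchi_h₀ : chi m g f h₀ = 0 := by
    have h1 : chi m g f (X 0) = xx f := by simp [chi, vv]
    have h2 : chi m g f (X 1) = IsLocalization.mk' (Ff f)
        (Polynomial.C (Ideal.Quotient.mk (Ideal.span {f}) g))
        (⟨Polynomial.X ^ m, m, rfl⟩ :
          Submonoid.powers (Polynomial.X : Polynomial (Qf f))) := by simp [chi, vv]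
    rw [hh₀, map_sub, map_mul, map_pow, h1, h2, chi_rename]
    have h3 : xx f ^ m = @algebraMap (Polynomial (Qf f)) (Ff f) Polynomial.commSemiring _ _ (Polynomial.X ^ m) := by
      rw [xx, map_pow]
    rw [h3, sub_eq_zero]
    have hspec := IsLocalization.mk'_spec' (Ff f)
        (Polynomial.C (Ideal.Quotient.mk (Ideal.span {f}) g))
        (⟨Polynomial.X ^ m, m, rfl⟩ :
          Submonoid.powers (Polynomial.X : Polynomial (Qf f)))
    exact hspec
  have hchif : chi m g f (rename jm f) = 0 := by
    rw [chi_rename]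
    have : Ideal.Quotient.mk (Ideal.span {f}) f = 0 :=
      Ideal.Quotient.eq_zero_iff_mem.mpr (Ideal.subset_span rfl)
    simp [emb, this]
  have hJker : ∀ p ∈ J, chi m g f p = 0 := by
    have hle : J ≤ RingHom.ker (chi m g f) := by
      rw [hJ, Ideal.span_le]
      intro y hy
      simp only [Set.mem_insert_iff, Set.mem_singleton_iff] at hy
      rcases hy with rfl | rfl
      · exact RingHom.mem_ker.mpr hchi_h₀
      · exact RingHom.mem_ker.mpr hchif
    exact fun p hp => RingHom.mem_ker.mp (hle hp)
  -- E r in kernel implies E r ∈ (rename jm f)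
  have hEf : ∀ r : Polynomial (MvPolynomial (Fin 2) k), chi m g f (EE r) = 0 →
      (EE r : MvPolynomial (Fin 4) k) ∈ Ideal.span {rename jm f} := by
    intro r hr
    rw [chi_EE] at hr
    have h0 : r.map (Ideal.Quotient.mk (Ideal.span {f})) = 0 := by
      apply halg_inj; rw [hr, map_zero]
    have hco : ∀ i, f ∣ r.coeff i := by
      intro i
      have h1 := congrArg (fun p => Polynomial.coeff p i) h0
      simp only [Polynomial.coeff_map, Polynomial.coeff_zero] at h1
      rw [Ideal.Quotient.eq_zero_iff_mem, Ideal.mem_span_singleton] at h1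
      exact h1
    obtain ⟨r', hr'⟩ := (Polynomial.C_dvd_iff_dvd_coeff f r).2 hco
    rw [hr', map_mul]
    have hEC : (EE (Polynomial.C f) : MvPolynomial (Fin 4) k) = rename jm f := by simp [EE]
    rw [hEC]
    exact Ideal.mul_mem_right _ _ (Ideal.subset_span rfl)
  -- Lemma 1: clearing Y
  have hEEX : (EE (Polynomial.X) : MvPolynomial (Fin 4) k) = X 0 := by simp [EE]
  have key1 : ∀ p : MvPolynomial (Fin 4) k, ∃ (N : ℕ)
      (r : Polynomial (MvPolynomial (Fin 2) k)),
      X 0 ^ N * p - EE r ∈ Ideal.span {h₀} := by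
    intro p
    induction p using MvPolynomial.induction_on with
    | C a =>
      refine ⟨0, Polynomial.C (MvPolynomial.C a), ?_⟩
      have : (EE (Polynomial.C (MvPolynomial.C a)) : MvPolynomial (Fin 4) k) = MvPolynomial.C a := by simp [EE]
      rw [pow_zero, one_mul, this, sub_self]
      exact zero_mem _
    | add p q hp hq =>
      obtain ⟨N1, r1, h1⟩ := hp
      obtain ⟨N2, r2, h2⟩ := hq
      refine ⟨N1 + N2, Polynomial.X ^ N2 * r1 + Polynomial.X ^ N1 * r2, ?_⟩
      have hid : X 0 ^ (N1 + N2) * (p + q)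
          - EE (Polynomial.X ^ N2 * r1 + Polynomial.X ^ N1 * r2)
          = X 0 ^ N2 * (X 0 ^ N1 * p - EE r1) + X 0 ^ N1 * (X 0 ^ N2 * q - EE r2) := by
        simp only [map_add, map_mul, map_pow, hEEX]; ring
      rw [hid]
      exact add_mem (Ideal.mul_mem_left _ _ h1) (Ideal.mul_mem_left _ _ h2)
    | mul_X p i hp =>
      obtain ⟨N, r, h⟩ := hp
      by_cases hi0 : i = 0
      · subst hi0
        refine ⟨N, r * Polynomial.X, ?_⟩
        have hid : X 0 ^ N * (p * X 0) - EE (r * Polynomial.X)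
            = (X 0 ^ N * p - EE r) * X 0 := by
          simp only [map_mul, hEEX]; ring
        rw [hid]
        exact Ideal.mul_mem_right _ _ h
      · by_cases hi1 : i = 1
        · subst hi1
          refine ⟨N + m, r * Polynomial.C g, ?_⟩
          have hEg : (EE (Polynomial.C g) : MvPolynomial (Fin 4) k) = rename jm g := by
            simp [EE]
          have hid : X 0 ^ (N + m) * (p * X 1) - EE (r * Polynomial.C g)
              = (X 0 ^ m * X 1) * (X 0 ^ N * p - EE r) + EE r * h₀ := by
            simp only [map_mul, hEg, hh₀]; ring
          rw [hid]
          exact add_mem (Ideal.mul_mem_left _ _ h)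
            (Ideal.mul_mem_left _ _ (Ideal.subset_span rfl))
        · have hv0 : (i : ℕ) ≠ 0 := fun h' => hi0 (Fin.ext (by simp [h']))
          have hv1 : (i : ℕ) ≠ 1 := fun h' => hi1 (Fin.ext (by simp [h']))
          have hi2 : 2 ≤ (i : ℕ) := by omega
          have hilt : (i : ℕ) < 4 := i.isLt
          set i' : Fin 2 := ⟨(i : ℕ) - 2, by omega⟩ with hi'
          have hji : jm i' = i := by
            apply Fin.ext
            simp only [jm, hi']
            omega
          refine ⟨N, r * Polynomial.C (X i'), ?_⟩
          have hEi : (EE (Polynomial.C (X i')) : MvPolynomial (Fin 4) k) = X i := by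
            rw [← hji]; simp [EE]
          have hid : X 0 ^ N * (p * X i) - EE (r * Polynomial.C (X i'))
              = (X 0 ^ N * p - EE r) * X i := by
            simp only [map_mul, hEi]; ring
          rw [hid]
          exact Ideal.mul_mem_right _ _ h
  -- Lemma: divisibility by X after evaluating X ↦ 0
  have hev0X : ev0 (X (0 : Fin 4) : MvPolynomial (Fin 4) k) = 0 := by simp [ev0]
  have hdvd0 : ∀ p : MvPolynomial (Fin 4) k, X 0 ∣ p - ev0 p := by
    intro p
    induction p using MvPolynomial.induction_on with
    | C a => simp [ev0]
    | add p q hp hq =>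
      rw [map_add, show p + q - (ev0 p + ev0 q) = (p - ev0 p) + (q - ev0 q) by ring]
      exact dvd_add hp hq
    | mul_X p i hp =>
      rw [map_mul]
      by_cases hi : i = 0
      · subst hi
        rw [hev0X, mul_zero, sub_zero]
        exact dvd_mul_left _ _
      · have hXi : ev0 (X i : MvPolynomial (Fin 4) k) = X i := by simp [ev0, hi]
        rw [hXi, show p * X i - ev0 p * X i = (p - ev0 p) * X i by ring]
        exact hp.mul_right _
  -- the renamed f is prime and divides neither X nor renamed g
  have hprime4 : Prime (rename jm f : MvPolynomial (Fin 4) k) :=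
    prime_rename_of_injective jm_injective hf
  have hf4X : ¬ (rename jm f : MvPolynomial (Fin 4) k) ∣ X 0 := by
    rintro ⟨c, hc⟩
    have h1 := congrArg ev1 hc
    rw [map_mul, ev1_rename] at h1
    have h2 : ev1 (X (0 : Fin 4) : MvPolynomial (Fin 4) k) = 1 := by simp [ev1]
    rw [h2] at h1
    exact hprime4.not_unit (IsUnit.of_mul_eq_one _ h1.symm)
  have hf4g : ¬ (rename jm f : MvPolynomial (Fin 4) k) ∣ rename jm g := by
    rintro ⟨c, hc⟩
    apply hfg
    have h1 := congrArg rr hc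
    rw [map_mul, rr_rename, rr_rename] at h1
    exact ⟨rr c, h1⟩
  -- Lemma 2: X 0 is regular mod J
  have key2 : ∀ u : MvPolynomial (Fin 4) k, X 0 * u ∈ J → u ∈ J := by
    intro u hu
    rw [hJ, Ideal.mem_span_pair] at hu
    obtain ⟨a, b, hab⟩ := hu
    have hev0h : ev0 h₀ = -(rename jm g) := by
      rw [hh₀, map_sub, map_mul, map_pow, hev0X, ev0_rename,
        zero_pow (by omega : m ≠ 0), zero_mul, zero_sub]
    have e0 := congrArg ev0 hab
    simp only [map_add, map_mul] at e0
    rw [ev0_rename, hev0h, hev0X, zero_mul] at e0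
    have hdvd : (rename jm f : MvPolynomial (Fin 4) k) ∣ ev0 a * rename jm g :=
      ⟨ev0 b, by linear_combination -e0⟩
    rcases hprime4.2.2 _ _ hdvd with hca | hcg
    · obtain ⟨c, hc⟩ := hca
      obtain ⟨d, hd⟩ := hdvd0 a
      have key : X 0 * (u - d * h₀) = rename jm f * (c * h₀ + b) := by
        linear_combination h₀ * hd + h₀ * hc - hab
      rcases hprime4.2.2 _ _ ⟨_, key⟩ with h' | h'
      · exact absurd h' hf4X
      · obtain ⟨e, he⟩ := h'
        have hu' : u = d * h₀ + rename jm f * e := by linear_combination he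
        rw [hu', hJ]
        exact add_mem
          (Ideal.mul_mem_left _ _ (Ideal.subset_span (Set.mem_insert _ _)))
          (Ideal.mul_mem_right _ _ (Ideal.subset_span (Set.mem_insert_of_mem _ rfl)))
    · exact absurd hcg hf4g
  -- Lemma 3: descent along powers of X 0
  have key3 : ∀ (N : ℕ) (u : MvPolynomial (Fin 4) k), X 0 ^ N * u ∈ J → u ∈ J := by
    intro N
    induction N with
    | zero => intro u hu; simpa using hu
    | succ n ih =>
      intro u hu
      apply key2
      apply ih
      rw [show X 0 ^ n * (X 0 * u) = X 0 ^ (n + 1) * u by ring]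
      exact hu
  -- elements killed by χ are in J
  have memker : ∀ c : MvPolynomial (Fin 4) k, chi m g f c = 0 → c ∈ J := by
    intro c hc
    obtain ⟨N, r, hNr⟩ := key1 c
    have hIJ : Ideal.span {h₀} ≤ J := by
      rw [hJ]
      exact Ideal.span_mono (Set.singleton_subset_iff.mpr (Set.mem_insert _ _))
    have h1 : chi m g f (X 0 ^ N * c - EE r) = 0 := hJker _ (hIJ hNr)
    have h2 : chi m g f (EE r) = 0 := by
      have h3 : chi m g f (X 0 ^ N * c) = 0 := by rw [map_mul, hc, mul_zero]
      rw [map_sub, h3, zero_sub, neg_eq_zero] at h1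
      exact h1
    have h4 : EE r ∈ J := by
      have h5 : Ideal.span {(rename jm f : MvPolynomial (Fin 4) k)} ≤ J := by
        rw [hJ]
        exact Ideal.span_mono (Set.singleton_subset_iff.mpr (Set.mem_insert_of_mem _ rfl))
      exact h5 (hEf r h2)
    have h6 : X 0 ^ N * c ∈ J := by
      rw [show X 0 ^ N * c = (X 0 ^ N * c - EE r) + EE r by ring]
      exact add_mem (hIJ hNr) h4
    exact key3 N c h6
  -- conclude
  constructor
  · intro htop
    have h1 : (1 : MvPolynomial (Fin 4) k) ∈ J := (Ideal.eq_top_iff_one J).mp htop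
    have h2 := hJker 1 h1
    rw [map_one] at h2
    exact one_ne_zero h2
  · intro a b hab
    have h1 : chi m g f a * chi m g f b = 0 := by
      rw [← map_mul]
      exact hJker _ hab
    rcases mul_eq_zero.mp h1 with h | h
    · exact Or.inl (memker a h)
    · exact Or.inr (memker b h)

end FiberAux2

end FiberRingAux

/-- **Lemma 3.4(i)**: for `B = k[X,Y,Z,T]/(XᵐY - g)` with `m > 1`, `g ∈ k[Z,T]`, and `f` a
prime element of `k[Z,T]` not dividing `g`, the ring `D = B/fB` is an integral domain.
Variables: `X = X 0`, `Y = X 1`, `Z = X 2`, `T = X 3`; `k[Z,T]` is embedded in `k[X,Y,Z,T]`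
by `Z ↦ X 2`, `T ↦ X 3`. -/
theorem fiber_ring_is_domain (k : Type) [Field k] (m : ℕ) (hm : 1 < m)
    (g f : MvPolynomial (Fin 2) k) (hf : Prime f) (hfg : ¬ f ∣ g) :
    let ι : MvPolynomial (Fin 2) k →ₐ[k] MvPolynomial (Fin 4) k :=
      MvPolynomial.rename (fun i : Fin 2 => (⟨(i : ℕ) + 2, by omega⟩ : Fin 4))
    let I : Ideal (MvPolynomial (Fin 4) k) :=
      Ideal.span {MvPolynomial.X 0 ^ m * MvPolynomial.X 1 - ι g}
    let B := MvPolynomial (Fin 4) k ⧸ I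
    IsDomain (B ⧸ Ideal.span {Ideal.Quotient.mk I (ι f)}) := by
  intro ι I B
  have hmap : Ideal.span {Ideal.Quotient.mk I (ι f)}
      = (Ideal.span {ι f}).map (Ideal.Quotient.mk I) := by
    rw [Ideal.map_span, Set.image_singleton]
  haveI hp : (I ⊔ Ideal.span {ι f}).IsPrime := by
    have hsup : I ⊔ Ideal.span {ι f}
        = Ideal.span {MvPolynomial.X 0 ^ m * MvPolynomial.X 1 - ι g, ι f} := by
      rw [← Ideal.span_union, Set.singleton_union]
    rw [hsup]
    exact FiberRingAux.FiberAux2.span_pair_prime m hm g f hf hfg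
  haveI : IsDomain (MvPolynomial (Fin 4) k ⧸ (I ⊔ Ideal.span {ι f})) :=
    Ideal.Quotient.isDomain _
  rw [hmap]
  exact Function.Injective.isDomain
    (DoubleQuot.quotQuotEquivQuotSup I (Ideal.span {ι f})).toRingHom
    (DoubleQuot.quotQuotEquivQuotSup I (Ideal.span {ι f})).injective
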